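/- The Pareto suboptimality gap of an action not in the super Pareto front is strictly positive: let {μ_a}_{a ∈ A} be a finite family of vectors in ℝ^D and O* its super Pareto front. If a ∉ O*, then Δ_a := min{ε ≥ 0 : (μ_a + ε·1) is incomparable with μ_{a'} for all a' ∈ O*} satisfies Δ_a > 0, and in fact Δ_a = max_{a' ∈ O*_a} min_{1≤j≤D} (μ_{a'}^(j) − μ_a^(j)) where O*_a is the set of actions in O* that super-dominate a. -/

import Mathlib

/-- The Pareto suboptimality gap of an action not in the super Pareto front is
strictly positive, and equals `max_{a' ∈ O*_a} min_j (μ_{a'}^(j) − μ_a^(j))`,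
where `O*_a` is the set of super Pareto optimal actions super-dominating `a`. -/
theorem psg_of_suboptimal_pos
    {A : Type*} [Fintype A] (D : ℕ) (hD : 0 < D) (μ : A → Fin D → ℝ) (a : A)
    (ha : a ∉ {b : A | ∀ b' : A, ¬(∀ j, μ b j < μ b' j)}) :
    0 < sSup {x : ℝ | ∃ a' : A, (∀ b' : A, ¬(∀ j, μ a' j < μ b' j)) ∧
        (∀ j, μ a j < μ a' j) ∧ x = sInf {y : ℝ | ∃ j : Fin D, y = μ a' j - μ a j}} ∧
    IsLeast {ε : ℝ | 0 ≤ ε ∧ ∀ a' ∈ {b : A | ∀ b' : A, ¬(∀ j, μ b j < μ b' j)},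
        (¬(∀ j, μ a j + ε < μ a' j) ∧ ¬(∀ j, μ a' j < μ a j + ε))}
      (sSup {x : ℝ | ∃ a' : A, (∀ b' : A, ¬(∀ j, μ a' j < μ b' j)) ∧
        (∀ j, μ a j < μ a' j) ∧ x = sInf {y : ℝ | ∃ j : Fin D, y = μ a' j - μ a j}}) := by
  classical
  haveI : Nonempty (Fin D) := ⟨⟨0, hD⟩⟩
  -- basic facts about the inner sets
  have hYfin : ∀ b : A, ({y : ℝ | ∃ j : Fin D, y = μ b j - μ a j}).Finite := by
    intro b
    have : {y : ℝ | ∃ j : Fin D, y = μ b j - μ a j}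
        = Set.range (fun j : Fin D => μ b j - μ a j) := by
      ext y; simp [eq_comm]
    rw [this]; exact Set.finite_range _
  have hYne : ∀ b : A, ({y : ℝ | ∃ j : Fin D, y = μ b j - μ a j}).Nonempty :=
    fun b => ⟨μ b ⟨0, hD⟩ - μ a ⟨0, hD⟩, ⟨⟨0, hD⟩, rfl⟩⟩
  have hmmem : ∀ b : A, ∃ j : Fin D,
      sInf {y : ℝ | ∃ j : Fin D, y = μ b j - μ a j} = μ b j - μ a j :=
    fun b => (hYne b).csInf_mem (hYfin b)
  have hmle : ∀ b : A, ∀ j : Fin D,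
      sInf {y : ℝ | ∃ j : Fin D, y = μ b j - μ a j} ≤ μ b j - μ a j :=
    fun b j => csInf_le (hYfin b).bddBelow ⟨j, rfl⟩
  -- existence of a super Pareto optimal action dominating `a`
  simp only [Set.mem_setOf_eq] at ha
  push_neg at ha
  obtain ⟨b0, hb0⟩ := ha
  have hSne : (Finset.univ.filter (fun b : A => ∀ j, μ a j < μ b j)).Nonempty :=
    ⟨b0, by simp [hb0]⟩
  obtain ⟨c, hc, hcmax⟩ := Finset.exists_max_image _ (fun b => ∑ j, μ b j) hSne
  have hcdom : ∀ j, μ a j < μ c j := by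
    simpa using hc
  have hcO : ∀ b' : A, ¬(∀ j, μ c j < μ b' j) := by
    intro b' hb'
    have hdom' : ∀ j, μ a j < μ b' j := fun j => (hcdom j).trans (hb' j)
    have hb'S : b' ∈ Finset.univ.filter (fun b : A => ∀ j, μ a j < μ b j) := by
      simp [hdom']
    have hle := hcmax b' hb'S
    have hlt : ∑ j, μ c j < ∑ j, μ b' j :=
      Finset.sum_lt_sum_of_nonempty Finset.univ_nonempty (fun j _ => hb' j)
    linarith
  -- the set whose sup is the gap
  set X := {x : ℝ | ∃ a' : A, (∀ b' : A, ¬(∀ j, μ a' j < μ b' j)) ∧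
      (∀ j, μ a j < μ a' j) ∧ x = sInf {y : ℝ | ∃ j : Fin D, y = μ a' j - μ a j}} with hX
  have hXfin : X.Finite := by
    apply Set.Finite.subset
      (Set.finite_range (fun b : A => sInf {y : ℝ | ∃ j : Fin D, y = μ b j - μ a j}))
    rintro x ⟨a', _, _, rfl⟩
    exact ⟨a', rfl⟩
  have hXne : X.Nonempty := ⟨_, c, hcO, hcdom, rfl⟩
  obtain ⟨a1, ha1O, ha1dom, ha1eq⟩ := hXne.csSup_mem hXfin
  obtain ⟨j1, hj1⟩ := hmmem a1
  have hpos : 0 < sSup X := by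
    rw [ha1eq, hj1]
    linarith [ha1dom j1]
  refine ⟨hpos, ⟨le_of_lt hpos, ?_⟩, ?_⟩
  · -- membership
    intro a' ha'O
    constructor
    · intro h
      have hdom : ∀ j, μ a j < μ a' j := fun j => lt_trans (by linarith) (h j)
      have hmem : sInf {y : ℝ | ∃ j : Fin D, y = μ a' j - μ a j} ∈ X :=
        ⟨a', ha'O, hdom, rfl⟩
      have hle := le_csSup hXfin.bddAbove hmem
      obtain ⟨j, hj⟩ := hmmem a'
      have := h j
      linarith [hj ▸ hle]
    · intro h
      obtain ⟨j, hj⟩ := not_forall.mp (ha'O a1)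
      have hj' : μ a1 j ≤ μ a' j := not_lt.mp hj
      have := hmle a1 j
      have := h j
      linarith [ha1eq]
  · -- lower bound
    rintro ε ⟨hε0, hε⟩
    obtain ⟨h1, _⟩ := hε a1 ha1O
    obtain ⟨j, hj⟩ := not_forall.mp h1
    have hj' : μ a1 j ≤ μ a j + ε := not_lt.mp hj
    have := hmle a1 j
    linarith [ha1eq]
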